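/- Fix 0 ≤ k ≤ n and a vertex index m ∈ {0,…,n}. The Whitney forms φ_σ corresponding to the k-dimensional subsimplices of T containing the vertex x_m are linearly independent over the ring of polynomials: if polynomial functions p_σ on ℝⁿ, indexed by the increasing maps σ : {0,…,k} → {0,…,n} with m ∈ ⟦σ⟧, satisfy Σ_σ p_σ(x) φ_σ(x) = 0 in Alt^k ℝⁿ for every x ∈ ℝⁿ, then every p_σ is identically zero. -/

import Mathlib

open scoped BigOperators

noncomputable section

/-- The wedge product of `k` linear functionals on `ℝⁿ`:
`(wedge f) v = det (matrix whose (j,i) entry is f i (v j))`. -/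
def wedge {n k : ℕ} (f : Fin k → ((Fin n → ℝ) →ₗ[ℝ] ℝ)) :
    (Fin n → ℝ) [⋀^Fin k]→ₗ[ℝ] ℝ :=
  (Matrix.detRowAlternating : (Fin k → ℝ) [⋀^Fin k]→ₗ[ℝ] ℝ).compLinearMap
    (LinearMap.pi f)

/-- The wedge product of a linear functional (a `1`-form) with an alternating `k`-form on `ℝⁿ`. -/
def oneWedge {n k : ℕ} (f : (Fin n → ℝ) →ₗ[ℝ] ℝ)
    (η : (Fin n → ℝ) [⋀^Fin k]→ₗ[ℝ] ℝ) :
    (Fin n → ℝ) [⋀^Fin (k + 1)]→ₗ[ℝ] ℝ :=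
  ((TensorProduct.lid ℝ ℝ).toLinearMap.compAlternatingMap
    (AlternatingMap.domCoprod
      ((AlternatingMap.ofSubsingleton ℝ (Fin n → ℝ) ℝ (0 : Fin 1)) f) η)).domDomCongr
    (finSumFinEquiv.trans (finCongr (Nat.add_comm 1 k)))

/-- A nondegenerate simplex in `ℝⁿ` with vertices `x 0, …, x n`, together with its barycentric
coordinate functions `λ_i = dlam i + c i`: the unique affine functions with `λ_i (x j) = δ_{ij}`,
`dlam i` being the linear part `dλ_i`. -/
structure Simplex (n : ℕ) where
  x : Fin (n + 1) → (Fin n → ℝ)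
  affineIndep : AffineIndependent ℝ x
  dlam : Fin (n + 1) → ((Fin n → ℝ) →ₗ[ℝ] ℝ)
  c : Fin (n + 1) → ℝ
  lam_vertex : ∀ i j, dlam i (x j) + c i = if i = j then 1 else 0

namespace Simplex

variable {n : ℕ} (B : Simplex n)

/-- The barycentric coordinate function `λ_i`. -/
def lam (i : Fin (n + 1)) (y : Fin n → ℝ) : ℝ := B.dlam i y + B.c i

/-- The barycentric monomial `λ^α = λ_0^{α_0} ⋯ λ_n^{α_n}`. -/
def lamPow (α : Fin (n + 1) → ℕ) (y : Fin n → ℝ) : ℝ := ∏ i, (B.lam i y) ^ (α i)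

/-- `dλ_σ = dλ_{σ 0} ∧ ⋯ ∧ dλ_{σ (k-1)}`. -/
def dlamWedge {k : ℕ} (σ : Fin k → Fin (n + 1)) : (Fin n → ℝ) [⋀^Fin k]→ₗ[ℝ] ℝ :=
  wedge fun j => B.dlam (σ j)

/-- The Whitney form `φ_σ = Σ_i (-1)^i λ_{σ i} dλ_{σ 0} ∧ ⋯ ∧ (omit dλ_{σ i}) ∧ ⋯ ∧ dλ_{σ k}`. -/
def whitney {k : ℕ} (σ : Fin (k + 1) → Fin (n + 1)) (y : Fin n → ℝ) :
    (Fin n → ℝ) [⋀^Fin k]→ₗ[ℝ] ℝ :=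
  ∑ i : Fin (k + 1), ((-1 : ℝ) ^ (i : ℕ) * B.lam (σ i) y) •
    wedge fun j : Fin k => B.dlam (σ (i.succAbove j))

/-- The tangent space `T_S = ∩_{i ∉ S} ker dλ_i` of the face `f_S`. -/
def tangent (S : Finset (Fin (n + 1))) : Set (Fin n → ℝ) :=
  {v | ∀ i ∉ S, B.dlam i v = 0}

/-- `ψ^{α,S}_i = dλ_i - (α_i / r) Σ_{j ∈ S} dλ_j`. -/
def psi (α : Fin (n + 1) → ℕ) (r : ℕ) (S : Finset (Fin (n + 1))) (i : Fin (n + 1)) :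
    (Fin n → ℝ) →ₗ[ℝ] ℝ :=
  B.dlam i - ((α i : ℝ) / (r : ℝ)) • ∑ j ∈ S, B.dlam j

/-- `ψ^{α,S}_σ = ψ^{α,S}_{σ 1} ∧ ⋯ ∧ ψ^{α,S}_{σ k}`. -/
def psiWedge {k : ℕ} (α : Fin (n + 1) → ℕ) (r : ℕ) (S : Finset (Fin (n + 1)))
    (σ : Fin k → Fin (n + 1)) : (Fin n → ℝ) [⋀^Fin k]→ₗ[ℝ] ℝ :=
  wedge fun j => B.psi α r S (σ j)

/-- The list of direction vectors `x_j - x_l`, with `x_j - x_l` repeated `α j` times. -/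
def dirList (α : Fin (n + 1) → ℕ) (l : Fin (n + 1)) : List (Fin n → ℝ) :=
  (List.finRange (n + 1)).flatMap fun j => List.replicate (α j) (B.x j - B.x l)

end Simplex

/-- The support `⟦α⟧` of a multi-index. -/
def suppF {n : ℕ} (α : Fin (n + 1) → ℕ) : Finset (Fin (n + 1)) :=
  Finset.univ.filter fun i => α i ≠ 0

/-- The range `⟦σ⟧` of an (increasing) map, as a finset. -/
def rangeF {n k : ℕ} (σ : Fin k → Fin (n + 1)) : Finset (Fin (n + 1)) :=
  Finset.image σ Finset.univ

/-- `f : ℝⁿ → ℝ` is a polynomial function of (total) degree at most `r`. -/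
def IsPolyDeg {n : ℕ} (r : ℕ) (f : (Fin n → ℝ) → ℝ) : Prop :=
  ∃ p : MvPolynomial (Fin n) ℝ, p.totalDegree ≤ r ∧ ∀ y, MvPolynomial.eval y p = f y

/-- `P_r`: the space of polynomial functions on `ℝⁿ` of degree at most `r`. -/
def Pscalar (n r : ℕ) : Submodule ℝ ((Fin n → ℝ) → ℝ) where
  carrier := {f | IsPolyDeg r f}
  add_mem' := by
    rintro f g ⟨p, hp, hpe⟩ ⟨q, hq, hqe⟩
    exact ⟨p + q, le_trans (MvPolynomial.totalDegree_add p q) (max_le hp hq),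
      fun y => by simp [hpe y, hqe y]⟩
  zero_mem' := ⟨0, by simp, fun y => by simp⟩
  smul_mem' := by
    rintro a f ⟨p, hp, hpe⟩
    exact ⟨a • p, le_trans (MvPolynomial.totalDegree_smul_le a p) hp,
      fun y => by simp [MvPolynomial.smul_eq_C_mul, hpe y]⟩

/-- `P_r Λ^k`: the space of polynomial differential `k`-forms of degree at most `r` on `ℝⁿ`. -/
def PLambda (n r k : ℕ) :
    Submodule ℝ ((Fin n → ℝ) → ((Fin n → ℝ) [⋀^Fin k]→ₗ[ℝ] ℝ)) where
  carrier := {ω | ∀ v : Fin k → (Fin n → ℝ), IsPolyDeg r fun y => ω y v}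
  add_mem' := by
    intro ω η hω hη v
    exact (Pscalar n r).add_mem (hω v) (hη v)
  zero_mem' := fun v => (Pscalar n r).zero_mem
  smul_mem' := by
    intro a ω hω v
    exact (Pscalar n r).smul_mem a (hω v)

/-- The Koszul operator `κ`, contracting a `(k+1)`-form field with the position vector. -/
def koszulHom (n k : ℕ) :
    ((Fin n → ℝ) → ((Fin n → ℝ) [⋀^Fin (k + 1)]→ₗ[ℝ] ℝ)) →ₗ[ℝ]
      ((Fin n → ℝ) → ((Fin n → ℝ) [⋀^Fin k]→ₗ[ℝ] ℝ)) where
  toFun ω := fun y => (ω y).curryLeft y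
  map_add' ω η := by funext y; simp
  map_smul' a ω := by funext y; simp

/-- `P⁻_r Λ^k = P_{r-1} Λ^k + κ (P_{r-1} Λ^{k+1})`. -/
def PminusLambda (n r k : ℕ) :
    Submodule ℝ ((Fin n → ℝ) → ((Fin n → ℝ) [⋀^Fin k]→ₗ[ℝ] ℝ)) :=
  PLambda n (r - 1) k ⊔ Submodule.map (koszulHom n k) (PLambda n (r - 1) (k + 1))

/-- `ω` has vanishing trace on the face `f_S`. -/
def VanishTrace {n k : ℕ} (B : Simplex n) (S : Finset (Fin (n + 1)))
    (ω : (Fin n → ℝ) → ((Fin n → ℝ) [⋀^Fin k]→ₗ[ℝ] ℝ)) : Prop :=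
  ∀ y : Fin n → ℝ, (∀ i ∉ S, B.lam i y = 0) →
    ∀ v : Fin k → (Fin n → ℝ), (∀ j, v j ∈ B.tangent S) → ω y v = 0

/-- Forms having vanishing trace on every face `f_S` with `|S| = n`
(the codimension-one faces). -/
def traceZeroSub {n : ℕ} (B : Simplex n) (k : ℕ) :
    Submodule ℝ ((Fin n → ℝ) → ((Fin n → ℝ) [⋀^Fin k]→ₗ[ℝ] ℝ)) where
  carrier := {ω | ∀ S : Finset (Fin (n + 1)), S.card = n → VanishTrace B S ω}
  add_mem' := by
    intro ω η hω hη S hS y hy v hv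
    simp only [Pi.add_apply, AlternatingMap.add_apply, hω S hS y hy v hv,
      hη S hS y hy v hv, add_zero]
  zero_mem' := by intro S hS y hy v hv; simp
  smul_mem' := by
    intro a ω hω S hS y hy v hv
    simp only [Pi.smul_apply, AlternatingMap.smul_apply, hω S hS y hy v hv, smul_zero]

/-- `P̊_r Λ^k`: polynomial forms with vanishing trace on the boundary. -/
def PLambdaZero {n : ℕ} (B : Simplex n) (r k : ℕ) :
    Submodule ℝ ((Fin n → ℝ) → ((Fin n → ℝ) [⋀^Fin k]→ₗ[ℝ] ℝ)) :=
  PLambda n r k ⊓ traceZeroSub B k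

/-- `P̊⁻_r Λ^k`: forms in `P⁻_r Λ^k` with vanishing trace on the boundary. -/
def PminusLambdaZero {n : ℕ} (B : Simplex n) (r k : ℕ) :
    Submodule ℝ ((Fin n → ℝ) → ((Fin n → ℝ) [⋀^Fin k]→ₗ[ℝ] ℝ)) :=
  PminusLambda n r k ⊓ traceZeroSub B k

/-- `f` vanishes to order `r` at `y`: all partial derivatives of order `< r` vanish at `y`. -/
def VanishOrder {n : ℕ} (r : ℕ) (f : (Fin n → ℝ) → ℝ) (y : Fin n → ℝ) : Prop :=
  ∀ m : ℕ, m < r → iteratedFDeriv ℝ m f y = 0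

/-- Iterated directional derivatives along a list of directions. -/
def dirDerivList {n : ℕ} : List (Fin n → ℝ) → ((Fin n → ℝ) → ℝ) → ((Fin n → ℝ) → ℝ)
  | [], f => f
  | t :: ts, f => dirDerivList ts fun y => fderiv ℝ f y t


namespace Stmt4

open MvPolynomial

lemma wedge_apply {n k : ℕ} (f : Fin k → ((Fin n → ℝ) →ₗ[ℝ] ℝ)) (v : Fin k → (Fin n → ℝ)) :
    wedge f v = Matrix.det (Matrix.of fun j i => f i (v j)) := rfl

lemma altSum_apply {n k : ℕ} {ι' : Type*} (s : Finset ι')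
    (f : ι' → ((Fin n → ℝ) [⋀^Fin k]→ₗ[ℝ] ℝ)) (v : Fin k → (Fin n → ℝ)) :
    (∑ i ∈ s, f i) v = ∑ i ∈ s, f i v := by
  classical
  induction s using Finset.induction_on with
  | empty => simp
  | insert _ _ h ih => simp [Finset.sum_insert h, ih]

lemma dlam_x {n : ℕ} (B : Simplex n) (i j : Fin (n + 1)) :
    B.dlam i (B.x j) = (if i = j then 1 else 0) - B.c i :=
  eq_sub_of_add_eq (B.lam_vertex i j)

lemma lam_x {n : ℕ} (B : Simplex n) (i j : Fin (n + 1)) :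
    B.lam i (B.x j) = if i = j then 1 else 0 := B.lam_vertex i j

noncomputable def affPoly {n : ℕ} (f : (Fin n → ℝ) →ₗ[ℝ] ℝ) (c : ℝ) : MvPolynomial (Fin n) ℝ :=
  MvPolynomial.C c + ∑ j, MvPolynomial.C (f fun t => if j = t then 1 else 0) * MvPolynomial.X j

lemma eval_affPoly {n : ℕ} (f : (Fin n → ℝ) →ₗ[ℝ] ℝ) (c : ℝ) (y : Fin n → ℝ) :
    MvPolynomial.eval y (affPoly f c) = f y + c := by
  rw [LinearMap.pi_apply_eq_sum_univ f y, affPoly]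
  simp only [map_add, map_sum, map_mul, eval_C, eval_X, smul_eq_mul]
  rw [add_comm]
  congr 1
  exact Finset.sum_congr rfl fun j _ => mul_comm _ _

lemma whitney_apply {n k : ℕ} (B : Simplex n) (σ : Fin (k + 1) → Fin (n + 1))
    (y : Fin n → ℝ) (v : Fin k → (Fin n → ℝ)) :
    B.whitney σ y v = ∑ i : Fin (k + 1), ((-1 : ℝ) ^ (i : ℕ) * B.lam (σ i) y) *
      ((wedge fun j : Fin k => B.dlam (σ (i.succAbove j))) v) := by
  simp only [Simplex.whitney, altSum_apply, AlternatingMap.smul_apply, smul_eq_mul]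

/-- The index type: increasing maps whose range contains `m`. -/
abbrev Idx (n k : ℕ) (m : Fin (n + 1)) : Type :=
  {σ : Fin (k + 1) → Fin (n + 1) // StrictMono σ ∧ m ∈ Set.range σ}

variable {n k : ℕ} {m : Fin (n + 1)}

/-- The position of `m` in the range of `σ`. -/
noncomputable def pos (σ : Idx n k m) : Fin (k + 1) := σ.2.2.choose

lemma pos_spec (σ : Idx n k m) : σ.1 (pos σ) = m := σ.2.2.choose_spec

/-- `σ` with `m` removed. -/
noncomputable def tau (σ : Idx n k m) : Fin k → Fin (n + 1) :=
  fun j => σ.1 ((pos σ).succAbove j)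

lemma tau_ne (σ : Idx n k m) (j : Fin k) : tau σ j ≠ m := fun hj =>
  Fin.succAbove_ne (pos σ) j (σ.2.1.injective (hj.trans (pos_spec σ).symm))

lemma tau_mono (σ : Idx n k m) : StrictMono (tau σ) :=
  σ.2.1.comp (Fin.strictMono_succAbove _)

lemma range_eq (σ : Idx n k m) : Set.range σ.1 = insert m (Set.range (tau σ)) := by
  ext a
  constructor
  · rintro ⟨i, rfl⟩
    rcases eq_or_ne i (pos σ) with rfl | hi
    · simp [pos_spec σ]
    · obtain ⟨j, hj⟩ := Fin.exists_succAbove_eq hi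
      exact Set.mem_insert_iff.mpr (Or.inr ⟨j, by simp [tau, hj]⟩)
  · rintro (rfl | ⟨j, rfl⟩)
    · exact ⟨pos σ, pos_spec σ⟩
    · exact ⟨_, rfl⟩

lemma eq_of_range_tau (σ σ' : Idx n k m)
    (hr : Set.range (tau σ) = Set.range (tau σ')) : σ = σ' := by
  have h1 : Set.range σ.1 = Set.range σ'.1 := by rw [range_eq, range_eq, hr]
  haveI : WellFoundedLT (Fin (k + 1)) := Finite.to_wellFoundedLT
  exact Subtype.ext ((StrictMono.range_inj σ.2.1 σ'.2.1).mp h1)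

/-- the test vectors. -/
noncomputable def Vvec (B : Simplex n) (σ : Idx n k m) : Fin k → (Fin n → ℝ) :=
  fun j => B.x (tau σ j) - B.x m

lemma dlam_Vvec (B : Simplex n) (σ σ' : Idx n k m) (i j : Fin k) :
    B.dlam (tau σ i) (Vvec B σ' j) = if tau σ i = tau σ' j then 1 else 0 := by
  rw [Vvec, map_sub, dlam_x, dlam_x, if_neg (tau_ne σ i)]
  ring

lemma wedge_tau (B : Simplex n) (σ σ' : Idx n k m) :
    (wedge fun j : Fin k => B.dlam (tau σ j)) (Vvec B σ') = if σ = σ' then 1 else 0 := by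
  classical
  rw [wedge_apply]
  by_cases hss : σ = σ'
  · subst hss
    rw [if_pos rfl]
    have hM : (Matrix.of fun j i : Fin k => B.dlam (tau σ i) (Vvec B σ j)) = 1 := by
      ext j i
      rw [Matrix.of_apply, dlam_Vvec, Matrix.one_apply]
      by_cases hij : j = i
      · subst hij; simp
      · rw [if_neg (fun hc => hij ((tau_mono σ).injective hc).symm), if_neg hij]
    rw [hM, Matrix.det_one]
  · rw [if_neg hss]
    have hsub : ¬ (∀ j, tau σ' j ∈ Set.range (tau σ)) := by
      intro hall
      apply hss
      apply eq_of_range_tau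
      have hsubset : (Finset.univ.image (tau σ')) ⊆ (Finset.univ.image (tau σ)) := by
        intro a ha
        simp only [Finset.mem_image, Finset.mem_univ, true_and] at ha ⊢
        obtain ⟨j, rfl⟩ := ha
        exact hall j
      have hcard : (Finset.univ.image (tau σ)).card ≤ (Finset.univ.image (tau σ')).card := by
        rw [Finset.card_image_of_injective _ (tau_mono σ).injective,
          Finset.card_image_of_injective _ (tau_mono σ').injective]
      have heq := Finset.eq_of_subset_of_card_le hsubset hcard
      have hco : ((Finset.univ.image (tau σ') : Finset (Fin (n + 1))) : Set (Fin (n + 1))) =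
          ((Finset.univ.image (tau σ) : Finset (Fin (n + 1))) : Set (Fin (n + 1))) := by
        rw [heq]
      simpa [Finset.coe_image, Set.image_univ] using hco.symm
    push_neg at hsub
    obtain ⟨j₀, hj₀⟩ := hsub
    apply Matrix.det_eq_zero_of_row_eq_zero j₀
    intro i
    rw [Matrix.of_apply, dlam_Vvec, if_neg]
    exact fun hc => hj₀ ⟨i, hc⟩

lemma key (B : Simplex n) (σ σ' : Idx n k m) :
    B.whitney σ.1 (B.x m) (Vvec B σ') =
      if σ = σ' then (-1 : ℝ) ^ ((pos σ : Fin (k + 1)) : ℕ) else 0 := by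
  classical
  rw [whitney_apply]
  rw [Finset.sum_eq_single (pos σ)]
  · have hlam : B.lam (σ.1 (pos σ)) (B.x m) = 1 := by
      rw [pos_spec σ, lam_x, if_pos rfl]
    rw [hlam, mul_one]
    have hw : (wedge fun j : Fin k => B.dlam (σ.1 ((pos σ).succAbove j))) (Vvec B σ') =
        if σ = σ' then 1 else 0 := by
      rw [show (fun j : Fin k => B.dlam (σ.1 ((pos σ).succAbove j))) =
        (fun j : Fin k => B.dlam (tau σ j)) from rfl]
      exact wedge_tau B σ σ'
    rw [hw]
    split <;> ring
  · intro i _ hi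
    have hne : σ.1 i ≠ m := fun hh => hi (σ.2.1.injective (hh.trans (pos_spec σ).symm))
    have : B.lam (σ.1 i) (B.x m) = 0 := by rw [lam_x, if_neg hne]
    rw [this]
    ring
  · intro hmem
    exact absurd (Finset.mem_univ _) hmem

/-- The polynomial matrix `A σ σ' = φ_σ(·)(V σ')`. -/
noncomputable def Amat (B : Simplex n) (m : Fin (n + 1)) (k : ℕ) :
    Matrix (Idx n k m) (Idx n k m) (MvPolynomial (Fin n) ℝ) :=
  fun σ σ' => ∑ i : Fin (k + 1),
    MvPolynomial.C ((-1 : ℝ) ^ (i : ℕ) *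
        ((wedge fun j : Fin k => B.dlam (σ.1 (i.succAbove j))) (Vvec B σ'))) *
      affPoly (B.dlam (σ.1 i)) (B.c (σ.1 i))

lemma eval_Amat (B : Simplex n) (y : Fin n → ℝ) (σ σ' : Idx n k m) :
    MvPolynomial.eval y (Amat B m k σ σ') = B.whitney σ.1 y (Vvec B σ') := by
  rw [Amat, whitney_apply, map_sum]
  refine Finset.sum_congr rfl fun i _ => ?_
  rw [map_mul, eval_C, eval_affPoly]
  have : B.lam (σ.1 i) y = B.dlam (σ.1 i) y + B.c (σ.1 i) := rfl
  rw [this]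
  ring

end Stmt4

open scoped Classical in
/-- the Whitney forms corresponding to the `k`-subsimplices containing the vertex
`x_m` are linearly independent over the ring of polynomials. -/
theorem stmt4 {n k : ℕ} (hn : 1 ≤ n) (hk : k ≤ n) (B : Simplex n) (m : Fin (n + 1))
    (p : (Fin (k + 1) → Fin (n + 1)) → MvPolynomial (Fin n) ℝ)
    (h : ∀ y : Fin n → ℝ,
      (∑ σ ∈ Finset.univ.filter (fun σ : Fin (k + 1) → Fin (n + 1) =>
          StrictMono σ ∧ m ∈ Set.range σ),
        MvPolynomial.eval y (p σ) • B.whitney σ y) = 0) :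
    ∀ σ : Fin (k + 1) → Fin (n + 1), StrictMono σ → m ∈ Set.range σ → p σ = 0 := by
  classical
  intro σ₀ hσ₀ hm₀
  have main : ∀ σ : Stmt4.Idx n k m, p σ.1 = 0 := by
    intro σfin
    set A := Stmt4.Amat B m k with hAdef
    -- the vector of polynomials is in the left kernel of A
    have hvec : ∀ σ' : Stmt4.Idx n k m, (∑ σ : Stmt4.Idx n k m, p σ.1 * A σ σ') = 0 := by
      intro σ'
      apply MvPolynomial.funext
      intro y
      rw [map_sum, map_zero]
      have hy2 := congrArg
        (fun ω : (Fin n → ℝ) [⋀^Fin k]→ₗ[ℝ] ℝ => ω (Stmt4.Vvec B σ')) (h y)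
      simp only [Stmt4.altSum_apply, AlternatingMap.smul_apply, AlternatingMap.zero_apply,
        smul_eq_mul] at hy2
      rw [Finset.sum_subtype (Finset.univ.filter (fun σ : Fin (k + 1) → Fin (n + 1) =>
          StrictMono σ ∧ m ∈ Set.range σ)) (p := fun σ : Fin (k + 1) → Fin (n + 1) =>
          StrictMono σ ∧ m ∈ Set.range σ) (fun σ => by simp)
          (fun σ => MvPolynomial.eval y (p σ) * B.whitney σ y (Stmt4.Vvec B σ'))] at hy2
      rw [← hy2]
      refine Finset.sum_congr rfl fun σ _ => ?_
      rw [map_mul, hAdef, Stmt4.eval_Amat]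
    -- determinant is nonzero
    have hdet0 : MvPolynomial.eval (B.x m) (Matrix.det A) ≠ 0 := by
      rw [RingHom.map_det, RingHom.mapMatrix_apply]
      have hdiag : A.map (MvPolynomial.eval (B.x m)) =
          Matrix.diagonal (fun σ : Stmt4.Idx n k m => (-1 : ℝ) ^ ((Stmt4.pos σ : ℕ))) := by
        ext σ σ'
        rw [Matrix.map_apply, hAdef, Stmt4.eval_Amat, Stmt4.key, Matrix.diagonal_apply]
      rw [hdiag, Matrix.det_diagonal]
      exact Finset.prod_ne_zero_iff.mpr fun σ _ => pow_ne_zero _ (by norm_num)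
    have hdet : Matrix.det A ≠ 0 := fun hc => hdet0 (by rw [hc, map_zero])
    -- Cramer / adjugate trick
    have h1 : Matrix.vecMul (fun σ : Stmt4.Idx n k m => p σ.1) A = 0 := by
      funext σ'
      have := hvec σ'
      simpa [Matrix.vecMul, dotProduct] using this
    have h3 : Matrix.vecMul (fun σ : Stmt4.Idx n k m => p σ.1) (A * A.adjugate) = 0 := by
      rw [← Matrix.vecMul_vecMul, h1, Matrix.zero_vecMul]
    rw [Matrix.mul_adjugate] at h3
    have h4 := congrFun h3 σfin
    have h5 : p σfin.1 * Matrix.det A = 0 := by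
      simpa [Matrix.vecMul, dotProduct, Matrix.smul_apply, Matrix.one_apply, mul_ite,
        mul_comm, Finset.sum_ite_eq'] using h4
    rcases mul_eq_zero.mp h5 with h6 | h6
    · exact h6
    · exact absurd h6 hdet
  exact main ⟨σ₀, hσ₀, hm₀⟩
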